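/- Let X be a two-sided shift space over a finite alphabet with property (**) (finitely many left special elements, none of them periodic). If z ∈ X is right shift tail equivalent to a left special element of X, then the one-sided sequence π(z) = (z_n)_{n≥0} is not eventually periodic. -/

import Mathlib

variable {𝔞 : Type*}

/-- The two-sided shift `τ : 𝔞^ℤ → 𝔞^ℤ`, `(τ z)_m = z_{m+1}`. -/
def tshift (z : ℤ → 𝔞) : ℤ → 𝔞 := fun n => z (n + 1)

/-- The projection `π : 𝔞^ℤ → 𝔞^ℕ`, `π(z) = (z_n)_{n ≥ 0}`. -/
def projSeq (z : ℤ → 𝔞) : ℕ → 𝔞 := fun n => z n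

/-- Prepending a letter to a one-sided sequence. -/
def consSeq (a : 𝔞) (x : ℕ → 𝔞) : ℕ → 𝔞 := fun n => Nat.casesOn n a x

/-- Prepending a finite word `μ` to a one-sided sequence: `x ↦ μ x`. -/
def wordCons : List 𝔞 → (ℕ → 𝔞) → ℕ → 𝔞
  | [], x => x
  | a :: μ, x => consSeq a (wordCons μ x)

/-- `z ∈ X` is left special if some `z' ∈ X` has the same projection
`π(z') = π(z)` but `z'_{-1} ≠ z_{-1}`. -/
def LeftSpecial (X : Set (ℤ → 𝔞)) (z : ℤ → 𝔞) : Prop :=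
  z ∈ X ∧ ∃ z' ∈ X, projSeq z' = projSeq z ∧ z' (-1) ≠ z (-1)

/-- `z ∈ 𝔞^ℤ` is periodic: `z_{n+m} = z_n` for all `n`, for some `m ≥ 1`. -/
def IsPeriodic (z : ℤ → 𝔞) : Prop :=
  ∃ m : ℕ, 0 < m ∧ ∀ n : ℤ, z (n + m) = z n

/-- `z` and `z'` are right shift tail equivalent: there are `m, N ∈ ℤ` with
`z_n = z'_{n+m}` for all `n > N`. -/
def RightTailEquiv (z z' : ℤ → 𝔞) : Prop :=
  ∃ m N : ℤ, ∀ n : ℤ, n > N → z n = z' (n + m)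

/-- `x ∈ 𝔞^ℕ` is eventually periodic: there are `k ≥ 1` and `N` with
`x_{n+k} = x_n` for all `n > N`. -/
def EventuallyPeriodic (x : ℕ → 𝔞) : Prop :=
  ∃ k N : ℕ, 0 < k ∧ ∀ n : ℕ, n > N → x (n + k) = x n

/-- `P_l(w)`, the set of words of length `l` preceding `w` in `X⁺ = π(X)`. -/
def Pword (Xplus : Set (ℕ → 𝔞)) (l : ℕ) (w : ℕ → 𝔞) : Set (List 𝔞) :=
  {μ | μ.length = l ∧ wordCons μ w ∈ Xplus}

/-- Property `(*)`: for every word `μ` in the language of `X⁺` there exists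
`x ∈ X⁺` with `P_{|μ|}(x) = {μ}`. -/
def PropertyStar (X : Set (ℤ → 𝔞)) : Prop :=
  ∀ μ : List 𝔞,
    (∃ x ∈ projSeq '' X, ∃ k : ℕ, ∀ i : Fin μ.length, x (k + i) = μ.get i) →
    ∃ x ∈ projSeq '' X, Pword (projSeq '' X) μ.length x = {μ}

/-- If `X` is a two-sided shift space over a finite alphabet with property
`(**)` (property `(*)`, finitely many left special elements, none of them
periodic) and `z ∈ X` is right shift tail equivalent to a left special
element, then `π(z)` is not eventually periodic. -/
theorem stmt18 [Finite 𝔞] [TopologicalSpace 𝔞] [DiscreteTopology 𝔞]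
    (X : Set (ℤ → 𝔞)) (hXcl : IsClosed X) (hX : tshift '' X = X)
    (hstar : PropertyStar X)
    (hfin : {z : ℤ → 𝔞 | LeftSpecial X z}.Finite)
    (hnp : ∀ z : ℤ → 𝔞, LeftSpecial X z → ¬ IsPeriodic z)
    (z z' : ℤ → 𝔞) (hz : z ∈ X) (hz' : LeftSpecial X z')
    (hrt : RightTailEquiv z z') :
    ¬ EventuallyPeriodic (projSeq z) := by

  rintro ⟨k, N₀, hk, hperz⟩
  obtain ⟨m, N₁, hrt⟩ := hrt
  obtain ⟨hz'X, z'', hz''X, hz''proj, hz''ne⟩ := hz'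
  classical
  -- the family of shifts of `z'`
  set f : ℤ → ℤ → 𝔞 := fun t n => z' (n + t) with hf
  have hfX : ∀ t : ℤ, f t ∈ X := by
    intro t
    induction t using Int.induction_on with
    | zero =>
        convert hz'X using 1
        funext n; simp [hf]
    | succ i ih =>
        have he : f ((i : ℤ) + 1) = tshift (f i) := by
          funext n
          show z' (n + ((i : ℤ) + 1)) = z' (n + 1 + i)
          ring_nf
        rw [he, ← hX]
        exact ⟨f i, ih, rfl⟩
    | pred i ih =>
        have hmem : f (-(i : ℤ)) ∈ tshift '' X := by rw [hX]; exact ih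
        obtain ⟨u, huX, hu⟩ := hmem
        have he : u = f (-(i : ℤ) - 1) := by
          funext n
          have h1 := congrFun hu (n - 1)
          have h2 : u (n - 1 + 1) = z' (n - 1 + -(i : ℤ)) := h1
          have h3 : n - 1 + 1 = n := by ring
          rw [h3] at h2
          rw [h2]
          show z' (n - 1 + -(i : ℤ)) = z' (n + (-(i : ℤ) - 1))
          ring_nf
        rw [← he]; exact huX
  have hk' : (0 : ℤ) < (k : ℤ) := by exact_mod_cast hk
  set M : ℤ := max (N₁ + m) ((N₀ : ℤ) + m) with hM
  have hMa : N₁ + m ≤ M := le_max_left _ _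
  have hMb : (N₀ : ℤ) + m ≤ M := le_max_right _ _
  -- eventual periodicity of z'
  have hper : ∀ q : ℤ, M < q → z' (q + k) = z' q := by
    intro q hq
    have h1 : N₁ < q - m := by omega
    have h2 : z' q = z (q - m) := by
      have := hrt (q - m) h1
      rw [this]; ring_nf
    have h1' : N₁ < q + k - m := by omega
    have h3 : z' (q + k) = z (q + k - m) := by
      have := hrt (q + k - m) h1'
      rw [this]; ring_nf
    have h4 : (N₀ : ℤ) < q - m := by omega
    set n' : ℕ := (q - m).toNat with hn'
    have hn'' : (n' : ℤ) = q - m := Int.toNat_of_nonneg (by omega)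
    have h5 : N₀ < n' := by omega
    have h6 := hperz n' h5
    have h6' : z ((n' : ℤ) + (k : ℤ)) = z (n' : ℤ) := by
      have : ((n' + k : ℕ) : ℤ) = (n' : ℤ) + (k : ℤ) := by push_cast; ring
      rw [← this]; exact h6
    rw [h2, h3, hn''] at *
    rw [show q + (k : ℤ) - m = q - m + (k : ℤ) by ring]
    rw [← hn''] at *
    exact h6'
  have hperj : ∀ (j : ℕ) (q : ℤ), M < q → z' (q + j * k) = z' q := by
    intro j
    induction j with
    | zero => intro q hq; simp
    | succ j ih =>
        intro q hq
        have h0 : (0 : ℤ) ≤ (j : ℤ) * k := by positivity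
        have e : q + ((j : ℕ) + 1 : ℕ) * (k : ℤ) = (q + (j : ℤ) * k) + k := by
          push_cast; ring
        rw [e, hper (q + (j : ℤ) * k) (by omega), ih q hq]
  -- z' is not periodic
  have hz'np : ¬ IsPeriodic z' := hnp z' ⟨hz'X, z'', hz''X, hz''proj, hz''ne⟩
  -- the shifts are pairwise distinct
  have hinj : Function.Injective f := by
    intro t t' h
    by_contra hne
    apply hz'np
    rcases lt_or_gt_of_ne hne with hlt | hlt
    · refine ⟨(t' - t).toNat, by omega, fun n => ?_⟩
      have hc : ((t' - t).toNat : ℤ) = t' - t := Int.toNat_of_nonneg (by omega)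
      rw [hc]
      have := congrFun h (n - t)
      have h2 : z' (n - t + t) = z' (n - t + t') := this
      have e1 : n - t + t = n := by ring
      have e2 : n - t + t' = n + (t' - t) := by ring
      rw [e1, e2] at h2
      exact h2.symm
    · refine ⟨(t - t').toNat, by omega, fun n => ?_⟩
      have hc : ((t - t').toNat : ℤ) = t - t' := Int.toNat_of_nonneg (by omega)
      rw [hc]
      have := congrFun h (n - t')
      have h2 : z' (n - t' + t) = z' (n - t' + t') := this
      have e1 : n - t' + t' = n := by ring
      have e2 : n - t' + t = n + (t - t') := by ring
      rw [e1, e2] at h2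
      exact h2
  -- the set of shift parameters giving left special elements is finite
  have hSfin : {t : ℤ | LeftSpecial X (f t)}.Finite :=
    Set.Finite.preimage (hinj.injOn) hfin
  obtain ⟨hi, hhi⟩ := hSfin.bddAbove
  obtain ⟨lo, hlo⟩ := hSfin.bddBelow
  -- choose j large
  set j : ℕ := (hi - lo).toNat + 1 with hj
  have hjbig : hi - lo < (j : ℤ) := by
    have := Int.self_le_toNat (hi - lo)
    push_cast [hj]; omega
  have hjk1 : (j : ℤ) ≤ (j : ℤ) * k :=
    le_mul_of_one_le_right (by positivity) (by omega)
  set a : ℤ := M + 1 with ha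
  set b : ℤ := M + 1 + j * k with hb
  have hab : ∀ n : ℤ, 0 ≤ n → f a n = f b n := by
    intro n hn
    show z' (n + a) = z' (n + b)
    have e : n + b = (n + a) + j * k := by rw [ha, hb]; ring
    rw [e, hperj j (n + a) (by omega)]
  have hfne : f a ≠ f b := by
    intro h
    have := hinj h
    have hjk0 : (0 : ℤ) < (j : ℤ) * k := by positivity
    omega
  obtain ⟨n₀, hn₀⟩ := Function.ne_iff.mp hfne
  obtain ⟨D, hD, hDmax⟩ := Int.exists_greatest_of_bdd
    (P := fun n => f a n ≠ f b n)
    ⟨0, fun n hn => by by_contra hcon; push_neg at hcon; exact hn (hab n (by omega))⟩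
    ⟨n₀, hn₀⟩
  -- the shifted pair gives left special elements
  have hagree : ∀ n : ℕ, f a ((n : ℤ) + D + 1) = f b ((n : ℤ) + D + 1) := by
    intro n
    by_contra h
    have := hDmax _ h
    have : (0 : ℤ) ≤ (n : ℤ) := Int.natCast_nonneg n
    omega
  have hprojeq : projSeq (f (b + D + 1)) = projSeq (f (a + D + 1)) := by
    funext n
    show z' ((n : ℤ) + (b + D + 1)) = z' ((n : ℤ) + (a + D + 1))
    have hg := hagree n
    have hg' : z' ((n : ℤ) + D + 1 + a) = z' ((n : ℤ) + D + 1 + b) := hg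
    calc z' ((n : ℤ) + (b + D + 1)) = z' ((n : ℤ) + D + 1 + b) := by ring_nf
      _ = z' ((n : ℤ) + D + 1 + a) := hg'.symm
      _ = z' ((n : ℤ) + (a + D + 1)) := by ring_nf
  have hneg1 : f (b + D + 1) (-1) ≠ f (a + D + 1) (-1) := by
    show z' (-1 + (b + D + 1)) ≠ z' (-1 + (a + D + 1))
    have e1 : (-1 : ℤ) + (b + D + 1) = D + b := by ring
    have e2 : (-1 : ℤ) + (a + D + 1) = D + a := by ring
    rw [e1, e2]
    intro h
    exact hD h.symm
  have hLSa : LeftSpecial X (f (a + D + 1)) :=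
    ⟨hfX _, f (b + D + 1), hfX _, hprojeq, hneg1⟩
  have hLSb : LeftSpecial X (f (b + D + 1)) :=
    ⟨hfX _, f (a + D + 1), hfX _, hprojeq.symm, fun h => hneg1 h.symm⟩
  have hmem1 : a + D + 1 ∈ {t : ℤ | LeftSpecial X (f t)} := hLSa
  have hmem2 : b + D + 1 ∈ {t : ℤ | LeftSpecial X (f t)} := hLSb
  have h1 : a + D + 1 ≤ hi := hhi hmem1
  have h2 : lo ≤ a + D + 1 := hlo hmem1
  have h3 : b + D + 1 ≤ hi := hhi hmem2
  have h4 : lo ≤ b + D + 1 := hlo hmem2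
  have : (j : ℤ) * k ≤ hi - lo := by rw [ha] at h2; rw [hb] at h3; linarith
  linarith
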